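/- arXiv:1408.2317 — 2 statements merged into one kernel-verified Lean document; each statement's English description precedes it below -/
import Mathlib

section
/- For every positive integer n, the complete graph K_n admits an interval total coloring with w_τ(K_n) equal to n if n is odd and 3n/2 if n is even, and with maximum span W_τ(K_n) = 2n−1. -/
namespace ITC

variable {V : Type*}

/-- A total coloring: proper on vertices, edges, and incident vertex-edge pairs. -/
def IsTotalColoring (G : SimpleGraph V) (cv : V → ℕ) (ce : Sym2 V → ℕ) : Prop :=
  (∀ u v, G.Adj u v → cv u ≠ cv v) ∧
  (∀ e f, e ∈ G.edgeSet → f ∈ G.edgeSet → e ≠ f → (∃ w, w ∈ e ∧ w ∈ f) → ce e ≠ ce f) ∧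
  (∀ v e, e ∈ G.edgeSet → v ∈ e → cv v ≠ ce e)

/-- The set of colors on a vertex `v` together with its incident edges. -/
def palette (G : SimpleGraph V) (cv : V → ℕ) (ce : Sym2 V → ℕ) (v : V) : Set ℕ :=
  insert (cv v) {c | ∃ e ∈ G.edgeSet, v ∈ e ∧ ce e = c}

/-- Degree of a vertex. -/
noncomputable def deg (G : SimpleGraph V) (v : V) : ℕ := (G.neighborSet v).ncard

/-- An interval total `t`-coloring. -/
def IsIntervalTotalColoring (G : SimpleGraph V) (t : ℕ) (cv : V → ℕ)
    (ce : Sym2 V → ℕ) : Prop :=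
  IsTotalColoring G cv ce ∧
  (∀ v, cv v ∈ Set.Icc 1 t) ∧ (∀ e ∈ G.edgeSet, ce e ∈ Set.Icc 1 t) ∧
  (∀ c ∈ Set.Icc 1 t, (∃ v, cv v = c) ∨ (∃ e ∈ G.edgeSet, ce e = c)) ∧
  (∀ v, ∃ a, palette G cv ce v = Set.Icc a (a + deg G v))

def HasIntervalTotalColoring (G : SimpleGraph V) (t : ℕ) : Prop :=
  ∃ cv ce, IsIntervalTotalColoring G t cv ce

/-- Minimum span of interval total colorings. -/
noncomputable def wtau (G : SimpleGraph V) : ℕ := sInf {t | HasIntervalTotalColoring G t}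

/-- Maximum span of interval total colorings. -/
noncomputable def Wtau (G : SimpleGraph V) : ℕ := sSup {t | HasIntervalTotalColoring G t}

/-- Total chromatic number: least `k` such that there is a total coloring
with colors in `{1, …, k}`. -/
noncomputable def totalChromaticNumber (G : SimpleGraph V) : ℕ :=
  sInf {k | ∃ cv ce, IsTotalColoring G cv ce ∧ (∀ v, cv v ∈ Set.Icc 1 k) ∧
    ∀ e ∈ G.edgeSet, ce e ∈ Set.Icc 1 k}

/-- A proper edge coloring. -/
def IsProperEdgeColoring (G : SimpleGraph V) (ce : Sym2 V → ℕ) : Prop :=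
  ∀ e f, e ∈ G.edgeSet → f ∈ G.edgeSet → e ≠ f → (∃ w, w ∈ e ∧ w ∈ f) → ce e ≠ ce f

/-- Colors appearing on the edges incident to `v`. -/
def edgePalette (G : SimpleGraph V) (ce : Sym2 V → ℕ) (v : V) : Set ℕ :=
  {c | ∃ e ∈ G.edgeSet, v ∈ e ∧ ce e = c}

/-- An interval (edge) `t`-coloring. -/
def IsIntervalEdgeColoring (G : SimpleGraph V) (t : ℕ) (ce : Sym2 V → ℕ) : Prop :=
  IsProperEdgeColoring G ce ∧
  (∀ e ∈ G.edgeSet, ce e ∈ Set.Icc 1 t) ∧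
  (∀ c ∈ Set.Icc 1 t, ∃ e ∈ G.edgeSet, ce e = c) ∧
  (∀ v, ∃ a, edgePalette G ce v = Set.Icc (a + 1) (a + deg G v))

/-- The hypercube `Q_n`. -/
def hypercube (n : ℕ) : SimpleGraph (Fin n → Bool) where
  Adj u v := ∃! i, u i ≠ v i
  symm := by
    constructor
    rintro u v ⟨i, hi, hu⟩
    exact ⟨i, Ne.symm hi, fun j hj => hu j (Ne.symm hj)⟩
  loopless := by
    constructor
    rintro u ⟨i, hi, -⟩
    exact hi rfl

/-- The complete graph on `Fin (2*r)` minus the perfect matching joining `i` and `i+r`. -/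
def Kminus (r : ℕ) : SimpleGraph (Fin (2 * r)) where
  Adj i j := i ≠ j ∧ ¬((i : ℕ) + r = (j : ℕ) ∨ (j : ℕ) + r = (i : ℕ))
  symm := by
    constructor
    rintro i j ⟨h1, h2⟩
    exact ⟨h1.symm, fun h => h2 h.symm⟩
  loopless := by
    constructor
    rintro i ⟨h1, -⟩
    exact h1 rfl

/-- Blow up each vertex of `H` into a copy of `β` (no edges inside copies). -/
def blowup {α : Type*} (H : SimpleGraph α) (β : Type*) : SimpleGraph (α × β) where
  Adj u v := H.Adj u.1 v.1
  symm := ⟨fun _ _ h => H.adj_symm h⟩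
  loopless := ⟨fun u h => H.irrefl h⟩

section Helpers

-- helpers
variable {n : ℕ}

lemma deg_top (hn : 0 < n) (v : Fin n) : deg (⊤ : SimpleGraph (Fin n)) v = n - 1 := by
  have h : (⊤ : SimpleGraph (Fin n)).neighborSet v = {v}ᶜ := by
    ext u
    simp only [SimpleGraph.neighborSet, SimpleGraph.top_adj, Set.mem_setOf_eq,
      Set.mem_compl_iff, Set.mem_singleton_iff]
    exact ne_comm
  rw [deg, h]
  have h2 := Set.ncard_add_ncard_compl ({v} : Set (Fin n))
  simp only [Set.ncard_singleton, Set.ncard_univ, Nat.card_eq_fintype_card,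
    Fintype.card_fin] at h2
  omega

lemma exists_other {e : Sym2 (Fin n)} (he : e ∈ (⊤ : SimpleGraph (Fin n)).edgeSet)
    {v : Fin n} (hv : v ∈ e) : ∃ u, u ≠ v ∧ e = s(v, u) := by
  rw [SimpleGraph.edgeSet_top, Set.mem_compl_iff, Sym2.mem_diagSet] at he
  induction e with
  | _ a b =>
    rw [Sym2.mk_isDiag_iff] at he
    rcases Sym2.mem_iff.1 hv with rfl | rfl
    · exact ⟨b, fun h => he h.symm, rfl⟩
    · exact ⟨a, fun h => he h, Sym2.eq_swap⟩

lemma mem_edgeSet_top {u v : Fin n} (h : u ≠ v) :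
    s(v, u) ∈ (⊤ : SimpleGraph (Fin n)).edgeSet := by
  rw [SimpleGraph.edgeSet_top, Set.mem_compl_iff, Sym2.mem_diagSet, Sym2.mk_isDiag_iff]
  exact fun hh => h hh.symm

lemma build (hn : 0 < n) (t : ℕ) (cv : Fin n → ℕ) (f : Fin n → Fin n → ℕ)
    (hsym : ∀ a b, f a b = f b a) (A : Fin n → ℕ)
    (h1 : ∀ u v : Fin n, u ≠ v → cv u ≠ cv v)
    (h2 : ∀ v a b : Fin n, a ≠ v → b ≠ v → a ≠ b → f v a ≠ f v b)
    (h3 : ∀ v u : Fin n, u ≠ v → cv v ≠ f v u)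
    (hcv : ∀ v, cv v ∈ Set.Icc 1 t)
    (hedge : ∀ u v : Fin n, u ≠ v → f u v ∈ Set.Icc 1 t)
    (hpal : ∀ v, insert (cv v) {c | ∃ u, u ≠ v ∧ f v u = c} = Set.Icc (A v) (A v + (n - 1)))
    (hcover : ∀ c ∈ Set.Icc 1 t, ∃ v : Fin n, A v ≤ c ∧ c ≤ A v + (n - 1)) :
    HasIntervalTotalColoring (⊤ : SimpleGraph (Fin n)) t := by
  set ce : Sym2 (Fin n) → ℕ := Sym2.lift ⟨f, hsym⟩ with hce
  have hlift : ∀ a b : Fin n, ce s(a, b) = f a b := fun a b => rfl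
  have hpal' : ∀ v, palette (⊤ : SimpleGraph (Fin n)) cv ce v
      = insert (cv v) {c | ∃ u, u ≠ v ∧ f v u = c} := by
    intro v
    unfold palette
    congr 1
    ext c
    constructor
    · rintro ⟨e, he, hv, rfl⟩
      obtain ⟨u, hu, rfl⟩ := exists_other he hv
      exact ⟨u, hu, rfl⟩
    · rintro ⟨u, hu, rfl⟩
      exact ⟨s(v, u), mem_edgeSet_top hu, Sym2.mem_mk_left v u, rfl⟩
  refine ⟨cv, ce, ⟨?_, ?_, ?_⟩, hcv, ?_, ?_, ?_⟩
  · exact fun u v h => h1 u v h.ne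
  · intro e e' he he' hne ⟨w, hwe, hwe'⟩
    obtain ⟨x, hx, rfl⟩ := exists_other he hwe
    obtain ⟨y, hy, rfl⟩ := exists_other he' hwe'
    rw [hlift, hlift]
    exact h2 w x y hx hy (fun h => hne (by rw [h]))
  · intro v e he hv
    obtain ⟨u, hu, rfl⟩ := exists_other he hv
    rw [hlift]
    exact h3 v u hu
  · intro e he
    obtain ⟨a, b⟩ := e
    have hab : a ≠ b := by
      rw [SimpleGraph.edgeSet_top, Set.mem_compl_iff, Sym2.mem_diagSet, Sym2.mk_isDiag_iff] at he
      exact he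
    exact hedge a b hab
  · intro c hc
    obtain ⟨v, hv1, hv2⟩ := hcover c hc
    have : c ∈ insert (cv v) {c | ∃ u, u ≠ v ∧ f v u = c} := by
      rw [hpal v]; exact Set.mem_Icc.2 ⟨hv1, hv2⟩
    rcases this with h | ⟨u, hu, hfc⟩
    · exact Or.inl ⟨v, h.symm⟩
    · exact Or.inr ⟨s(v, u), mem_edgeSet_top hu, hfc⟩
  · intro v
    exact ⟨A v, by rw [hpal' v, hpal v, deg_top hn]⟩

/-- Construction with `2n-1` colors. -/
lemma existsW (hn : 0 < n) :
    HasIntervalTotalColoring (⊤ : SimpleGraph (Fin n)) (2 * n - 1) := by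
  apply build hn (2 * n - 1) (fun v => 2 * v.val + 1)
    (fun u v => u.val + v.val + 1) (fun a b => by ring) (fun v => v.val + 1)
  · intro u v h hc
    exact h (Fin.ext (by omega))
  · intro v a b ha hb hab hc
    exact hab (Fin.ext (by omega))
  · intro v u hu hc
    exact hu (Fin.ext (by omega))
  · intro v
    have := v.isLt
    simp only [Set.mem_Icc]; omega
  · intro u v h
    have := u.isLt; have := v.isLt
    simp only [Set.mem_Icc]; omega
  · intro v
    have hv := v.isLt
    ext c
    simp only [Set.mem_insert_iff, Set.mem_setOf_eq, Set.mem_Icc]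
    constructor
    · rintro (rfl | ⟨u, hu, rfl⟩)
      · omega
      · have := u.isLt; omega
    · intro hc
      by_cases hcv : c = 2 * v.val + 1
      · exact Or.inl hcv
      · refine Or.inr ⟨⟨c - v.val - 1, by omega⟩, ?_, ?_⟩
        · intro h
          apply hcv
          have h2 : c - v.val - 1 = v.val := by simpa using congrArg Fin.val h
          omega
        · show v.val + (c - v.val - 1) + 1 = c
          omega
  · intro c hc
    simp only [Set.mem_Icc] at hc
    by_cases h : c ≤ n
    · exact ⟨⟨0, hn⟩, by simp; omega⟩
    · exact ⟨⟨c - n, by omega⟩, by simp; omega⟩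

lemma mod_add_inj (hn : 0 < n) {x a b : ℕ} (ha : a < n) (hb : b < n)
    (h : (x + a) % n = (x + b) % n) : a = b := by
  have h2 : a ≡ b [MOD n] := Nat.ModEq.add_left_cancel (Nat.ModEq.refl x) h
  rwa [Nat.ModEq, Nat.mod_eq_of_lt ha, Nat.mod_eq_of_lt hb] at h2

lemma mod_two_mul_inj (hodd : Odd n) {a b : ℕ} (ha : a < n) (hb : b < n)
    (h : (2 * a) % n = (2 * b) % n) : a = b := by
  have hco : n.gcd 2 = 1 := Nat.coprime_two_right.2 hodd
  have h2 : a ≡ b [MOD n] := Nat.ModEq.cancel_left_of_coprime hco h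
  rwa [Nat.ModEq, Nat.mod_eq_of_lt ha, Nat.mod_eq_of_lt hb] at h2

lemma mod_add_mod_left (x y : ℕ) : (x + y % n) % n = (x + y) % n := by
  conv_rhs => rw [Nat.add_mod]
  rw [Nat.add_mod x (y % n), Nat.mod_mod_of_dvd]
  exact dvd_refl n

/-- Construction with `n` colors for odd `n`. -/
lemma existsOdd (hn : 0 < n) (hodd : Odd n) :
    HasIntervalTotalColoring (⊤ : SimpleGraph (Fin n)) n := by
  apply build hn n (fun v => 2 * v.val % n + 1)
    (fun u v => (u.val + v.val) % n + 1)
    (fun a b => by show (a.val + b.val) % n + 1 = (b.val + a.val) % n + 1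
                   rw [Nat.add_comm a.val b.val]) (fun _ => 1)
  · intro u v h hc
    exact h (Fin.ext (mod_two_mul_inj hodd u.isLt v.isLt (by omega)))
  · intro v a b ha hb hab hc
    exact hab (Fin.ext (mod_add_inj (x := v.val) hn a.isLt b.isLt (by omega)))
  · intro v u hu hc
    rw [two_mul] at hc
    exact hu (Fin.ext ((mod_add_inj (x := v.val) hn v.isLt u.isLt (by omega)).symm))
  · intro v
    have := Nat.mod_lt (2 * v.val) hn
    simp only [Set.mem_Icc]; omega
  · intro u v h
    have := Nat.mod_lt (u.val + v.val) hn
    simp only [Set.mem_Icc]; omega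
  · intro v
    have hv := v.isLt
    ext c
    simp only [Set.mem_insert_iff, Set.mem_setOf_eq, Set.mem_Icc]
    constructor
    · rintro (rfl | ⟨u, hu, rfl⟩)
      · have := Nat.mod_lt (2 * v.val) hn; omega
      · have := Nat.mod_lt (v.val + u.val) hn; omega
    · intro hc
      by_cases hcv : c = 2 * v.val % n + 1
      · exact Or.inl hcv
      · have key : (v.val + (c - 1 + (n - v.val)) % n) % n = c - 1 := by
          rw [mod_add_mod_left]
          have h2 : v.val + (c - 1 + (n - v.val)) = c - 1 + n := by omega
          rw [h2, Nat.add_mod_right, Nat.mod_eq_of_lt (by omega)]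
        refine Or.inr ⟨⟨(c - 1 + (n - v.val)) % n, Nat.mod_lt _ hn⟩, ?_, ?_⟩
        · intro h
          apply hcv
          have h2 : (c - 1 + (n - v.val)) % n = v.val := by simpa using congrArg Fin.val h
          rw [h2] at key
          rw [← two_mul] at key
          omega
        · show (v.val + (c - 1 + (n - v.val)) % n) % n + 1 = c
          rw [key]; omega
  · intro c hc
    refine ⟨⟨0, hn⟩, ?_⟩
    show 1 ≤ c ∧ c ≤ 1 + (n - 1)
    simp only [Set.mem_Icc] at hc
    omega


def evF (m lo hi : ℕ) : ℕ :=
  if hi = 2 * m - 1 then (if lo < m then 2 * lo + 2 else 2 * lo + 3 - 2 * m)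
  else (if lo < m then lo + hi + 2 else lo + hi + 3 - 2 * m)

def evCv (m x : ℕ) : ℕ :=
  if x = 2 * m - 1 then 2 * m + 1 else if x < m then x + 1 else x + m + 2

def evA (m x : ℕ) : ℕ :=
  if x = 2 * m - 1 then 2 else if x < m then x + 1 else x + 3 - m

def evU (m v c : ℕ) : ℕ :=
  if v = 2 * m - 1 then (if c % 2 = 0 then (c - 2) / 2 else (c + 2 * m - 3) / 2)
  else if v < m then (if c = 2 * v + 2 then 2 * m - 1 else c - v - 2)
  else (if c = 2 * v + 3 - 2 * m then 2 * m - 1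
        else if v + 2 ≤ c then c - v - 2 else c + 2 * m - 3 - v)

lemma evMain (m : ℕ) (hm : 0 < m) (v c : ℕ) (hv : v < 2 * m)
    (hc1 : evA m v ≤ c) (hc2 : c ≤ evA m v + (2 * m - 1)) (hcc : c ≠ evCv m v) :
    evU m v c < 2 * m ∧ evU m v c ≠ v ∧
      evF m (min v (evU m v c)) (max v (evU m v c)) = c := by
  unfold evA evCv evU evF at *
  split_ifs at * <;> omega

/-- Construction with `3m` colors for `n = 2m`. -/
lemma existsEven (m : ℕ) (hm : 0 < m) (hnm : n = 2 * m) :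
    HasIntervalTotalColoring (⊤ : SimpleGraph (Fin n)) (3 * m) := by
  have hn : 0 < n := by omega
  apply build hn (3 * m) (fun v => evCv m v.val)
    (fun u v => evF m (min u.val v.val) (max u.val v.val))
    (fun a b => by
      show evF m (min a.val b.val) (max a.val b.val)
          = evF m (min b.val a.val) (max b.val a.val)
      rw [Nat.min_comm, Nat.max_comm]) (fun v => evA m v.val)
  · intro u v h hc
    have hu := u.isLt; have hv := v.isLt
    refine h (Fin.ext ?_)
    revert hc; unfold evCv; split_ifs <;> omega
  · intro v a b ha hb hab hc
    have hva := a.isLt; have hvb := b.isLt; have hvv := v.isLt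
    have ha' : a.val ≠ v.val := fun h => ha (Fin.ext h)
    have hb' : b.val ≠ v.val := fun h => hb (Fin.ext h)
    refine hab (Fin.ext ?_)
    revert hc; unfold evF; split_ifs <;> omega
  · intro v u hu hc
    have hvu := u.isLt; have hvv := v.isLt
    have hu' : u.val ≠ v.val := fun h => hu (Fin.ext h)
    revert hc; unfold evCv evF; split_ifs <;> omega
  · intro v
    have hv := v.isLt
    simp only [Set.mem_Icc]
    unfold evCv; split_ifs <;> omega
  · intro u v h
    have hu := u.isLt; have hv := v.isLt
    have h' : u.val ≠ v.val := fun hh => h (Fin.ext hh)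
    simp only [Set.mem_Icc]
    unfold evF; split_ifs <;> omega
  · intro v
    have hv := v.isLt
    ext c
    simp only [Set.mem_insert_iff, Set.mem_setOf_eq, Set.mem_Icc]
    constructor
    · rintro (rfl | ⟨u, hu, rfl⟩)
      · unfold evCv evA; split_ifs <;> omega
      · have hvu := u.isLt
        have hu' : v.val ≠ u.val := fun h => hu (Fin.ext h.symm)
        unfold evF evA; split_ifs <;> omega
    · intro hc
      by_cases hcc : c = evCv m v.val
      · exact Or.inl hcc
      · have hv2 : v.val < 2 * m := by omega
        have key := evMain m hm v.val c hv2 (by omega) (by omega) hcc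
        refine Or.inr ⟨⟨evU m v.val c, by omega⟩, ?_, ?_⟩
        · intro h
          exact key.2.1 (by simpa using congrArg Fin.val h)
        · show evF m (min v.val (evU m v.val c)) (max v.val (evU m v.val c)) = c
          exact key.2.2
  · intro c hc
    simp only [Set.mem_Icc] at hc
    by_cases h1 : c ≤ 2 * m
    · refine ⟨⟨0, hn⟩, ?_⟩
      show evA m 0 ≤ c ∧ c ≤ evA m 0 + (n - 1)
      unfold evA; split_ifs <;> omega
    · by_cases h2 : c = 2 * m + 1
      · refine ⟨⟨2 * m - 1, by omega⟩, ?_⟩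
        show evA m (2 * m - 1) ≤ c ∧ c ≤ evA m (2 * m - 1) + (n - 1)
        unfold evA; split_ifs <;> omega
      · refine ⟨⟨c - m - 2, by omega⟩, ?_⟩
        show evA m (c - m - 2) ≤ c ∧ c ≤ evA m (c - m - 2) + (n - 1)
        unfold evA; split_ifs <;> omega


lemma palette_sub {t : ℕ} {cv : Fin n → ℕ} {ce : Sym2 (Fin n) → ℕ}
    (h : IsIntervalTotalColoring (⊤ : SimpleGraph (Fin n)) t cv ce) (v : Fin n) :
    palette (⊤ : SimpleGraph (Fin n)) cv ce v ⊆ Set.Icc 1 t := by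
  intro c hc
  unfold palette at hc
  rw [Set.mem_insert_iff] at hc
  rcases hc with rfl | ⟨e, he, _, rfl⟩
  · exact h.2.1 v
  · exact h.2.2.1 e he

lemma getA (hn : 0 < n) {t : ℕ} {cv : Fin n → ℕ} {ce : Sym2 (Fin n) → ℕ}
    (h : IsIntervalTotalColoring (⊤ : SimpleGraph (Fin n)) t cv ce) (v : Fin n) :
    ∃ a, palette (⊤ : SimpleGraph (Fin n)) cv ce v = Set.Icc a (a + (n - 1)) ∧
      1 ≤ a ∧ a + (n - 1) ≤ t := by
  obtain ⟨a, ha⟩ := h.2.2.2.2 v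
  rw [deg_top hn] at ha
  have h1 : a ∈ palette (⊤ : SimpleGraph (Fin n)) cv ce v := by
    rw [ha]; exact Set.mem_Icc.2 ⟨le_refl a, Nat.le_add_right _ _⟩
  have h2 : a + (n - 1) ∈ palette (⊤ : SimpleGraph (Fin n)) cv ce v := by
    rw [ha]; exact Set.mem_Icc.2 ⟨Nat.le_add_right _ _, le_refl _⟩
  have b1 := Set.mem_Icc.1 (palette_sub h v h1)
  have b2 := Set.mem_Icc.1 (palette_sub h v h2)
  exact ⟨a, ha, b1.1, b2.2⟩

lemma lb_n (hn : 0 < n) {t : ℕ}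
    (h : HasIntervalTotalColoring (⊤ : SimpleGraph (Fin n)) t) : n ≤ t := by
  obtain ⟨cv, ce, h⟩ := h
  obtain ⟨a, _, ha1, ha2⟩ := getA hn h ⟨0, hn⟩
  omega

lemma mem_palette_of_used {cv : Fin n → ℕ} {ce : Sym2 (Fin n) → ℕ} {c : ℕ}
    (h : (∃ v, cv v = c) ∨ (∃ e ∈ (⊤ : SimpleGraph (Fin n)).edgeSet, ce e = c)) :
    ∃ v, c ∈ palette (⊤ : SimpleGraph (Fin n)) cv ce v := by
  rcases h with ⟨v, rfl⟩ | ⟨e, he, rfl⟩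
  · exact ⟨v, Set.mem_insert _ _⟩
  · obtain ⟨a, b⟩ := e
    exact ⟨a, Set.mem_insert_iff.2 (Or.inr ⟨s(a, b), he, Sym2.mem_mk_left a b, rfl⟩)⟩

lemma ub (hn : 0 < n) {t : ℕ}
    (h : HasIntervalTotalColoring (⊤ : SimpleGraph (Fin n)) t) : t ≤ 2 * n - 1 := by
  by_contra hlt
  push_neg at hlt
  obtain ⟨cv, ce, h⟩ := h
  have ht2 : 2 * n ≤ t := by omega
  obtain ⟨v, hvt⟩ := mem_palette_of_used
    (h.2.2.2.1 t (Set.mem_Icc.2 ⟨by omega, le_refl t⟩))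
  obtain ⟨u, hu1⟩ := mem_palette_of_used
    (h.2.2.2.1 1 (Set.mem_Icc.2 ⟨le_refl 1, by omega⟩))
  obtain ⟨av, hav, hav1, hav2⟩ := getA hn h v
  obtain ⟨au, hau, hau1, hau2⟩ := getA hn h u
  rw [hav, Set.mem_Icc] at hvt
  rw [hau, Set.mem_Icc] at hu1
  have huv : u ≠ v := by
    intro heq
    rw [heq] at hau
    have hmem : av ∈ Set.Icc au (au + (n - 1)) := by
      rw [← hau, hav]
      exact Set.mem_Icc.2 ⟨le_refl _, Nat.le_add_right _ _⟩
    rw [Set.mem_Icc] at hmem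
    omega
  have hce1 : ce s(u, v) ∈ palette (⊤ : SimpleGraph (Fin n)) cv ce u :=
    Set.mem_insert_iff.2 (Or.inr ⟨s(u, v), mem_edgeSet_top (Ne.symm huv),
      Sym2.mem_mk_left u v, rfl⟩)
  have hce2 : ce s(u, v) ∈ palette (⊤ : SimpleGraph (Fin n)) cv ce v :=
    Set.mem_insert_iff.2 (Or.inr ⟨s(u, v), mem_edgeSet_top (Ne.symm huv),
      Sym2.mem_mk_right u v, rfl⟩)
  rw [hau, Set.mem_Icc] at hce1
  rw [hav, Set.mem_Icc] at hce2
  omega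

lemma lb_even (m : ℕ) (hm : 0 < m) (hnm : n = 2 * m) {t : ℕ}
    (h : HasIntervalTotalColoring (⊤ : SimpleGraph (Fin n)) t) : 3 * m ≤ t := by
  classical
  have hn : 0 < n := by omega
  have htn : n ≤ t := lb_n hn h
  by_contra hlt
  push_neg at hlt
  obtain ⟨cv, ce, h⟩ := h
  choose A hA hA1 hA2 using fun v => getA hn h v
  have hAm : ∀ v, A v ≤ m := fun v => by have := hA2 v; omega
  have hinj : Function.Injective cv := by
    intro u v hc
    by_contra hne
    exact h.1.1 u v hne hc
  have hkey : ∀ v : Fin n, ¬(m ≤ cv v ∧ cv v ≤ 2 * m) := by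
    rintro v ⟨hm1, hm2⟩
    have hcpal : ∀ u : Fin n, cv v ∈ palette (⊤ : SimpleGraph (Fin n)) cv ce u := by
      intro u
      rw [hA u, Set.mem_Icc]
      have := hA1 u; have := hAm u
      constructor <;> omega
    have hex : ∀ u : Fin n, u ≠ v → ∃ w, w ≠ u ∧ ce s(u, w) = cv v := by
      intro u hu
      have hc := hcpal u
      rw [palette, Set.mem_insert_iff] at hc
      rcases hc with hcv | ⟨e, he, hue, hce⟩
      · exact absurd (hinj hcv.symm) hu
      · obtain ⟨w, hw, rfl⟩ := exists_other he hue
        exact ⟨w, hw, hce⟩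
    set g : Fin n → Fin n := fun u => if hu : u = v then u else Classical.choose (hex u hu)
      with hg
    have hg1 : ∀ u, (hu : u ≠ v) → g u ≠ u ∧ ce s(u, g u) = cv v := by
      intro u hu
      simp only [hg, dif_neg hu]
      exact Classical.choose_spec (hex u hu)
    have hgv : g v = v := by simp [hg]
    have hgne : ∀ u, u ≠ v → g u ≠ v := by
      intro u hu hgu
      have h2 := (hg1 u hu).2
      rw [hgu] at h2
      exact h.1.2.2 v s(u, v) (mem_edgeSet_top (Ne.symm hu)) (Sym2.mem_mk_right u v) h2.symm
    have hginv : ∀ u, g (g u) = u := by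
      intro u
      by_cases hu : u = v
      · rw [hu, hgv, hgv]
      · have h1 := hg1 u hu
        have hw := hgne u hu
        have h2 := hg1 (g u) hw
        by_contra hne
        refine h.1.2.1 s(g u, u) s(g u, g (g u)) (mem_edgeSet_top (Ne.symm h1.1))
          (mem_edgeSet_top h2.1) ?_ ⟨g u, Sym2.mem_mk_left _ _, Sym2.mem_mk_left _ _⟩ ?_
        · intro heq
          exact hne (Sym2.congr_right.1 heq).symm
        · rw [h2.2, ← h1.2, Sym2.eq_swap]
    have hsum := Finset.sum_ninvolution (s := (Finset.univ : Finset (Fin n)))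
      (f := fun u => if u = v then (0 : ZMod 2) else 1) g
      (fun a => by
        show (if a = v then (0 : ZMod 2) else 1) + (if g a = v then (0 : ZMod 2) else 1) = 0
        by_cases ha : a = v
        · subst ha; rw [hgv]; simp
        · have := hgne a ha
          rw [if_neg ha, if_neg this]
          decide)
      (fun a hfa => by
        by_cases ha : a = v
        · exfalso; apply hfa; show (if a = v then (0 : ZMod 2) else 1) = 0; rw [if_pos ha]
        · exact (hg1 a ha).1)
      (fun a => Finset.mem_univ _) hginv
    have hval : ∑ u : Fin n, (if u = v then (0 : ZMod 2) else 1)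
        = (n : ZMod 2) - 1 := by
      have : ∀ u : Fin n, (if u = v then (0 : ZMod 2) else 1)
          = 1 - (if u = v then 1 else 0) := by
        intro u; split_ifs <;> ring
      rw [Finset.sum_congr rfl (fun u _ => this u), Finset.sum_sub_distrib,
        Finset.sum_const, Finset.card_univ, Fintype.card_fin,
        Finset.sum_ite_eq' Finset.univ v (fun _ => (1 : ZMod 2))]
      simp
    rw [hval] at hsum
    have hcast : ((n : ℕ) : ZMod 2) = 0 := by
      have h2 : ((2 : ℕ) : ZMod 2) = 0 := by decide
      rw [hnm, Nat.cast_mul, h2, zero_mul]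
    rw [hcast] at hsum
    have : (1 : ZMod 2) = 0 := by linear_combination -hsum
    exact absurd this (by decide)
  have himg : (Finset.image cv Finset.univ).card = n := by
    rw [Finset.card_image_of_injective _ hinj, Finset.card_univ, Fintype.card_fin]
  have hsub : Finset.image cv Finset.univ ⊆ Finset.Icc 1 t \ Finset.Icc m (2 * m) := by
    intro c hc
    obtain ⟨v, _, rfl⟩ := Finset.mem_image.1 hc
    have hb := Set.mem_Icc.1 (h.2.1 v)
    have hk := hkey v
    rw [Finset.mem_sdiff, Finset.mem_Icc, Finset.mem_Icc]
    exact ⟨⟨hb.1, hb.2⟩, fun hh => hk ⟨hh.1, hh.2⟩⟩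
  have hcard := Finset.card_le_card hsub
  rw [Finset.card_sdiff_of_subset (by
    intro x hx
    rw [Finset.mem_Icc] at *
    omega)] at hcard
  rw [Nat.card_Icc, Nat.card_Icc] at hcard
  omega
end Helpers

theorem stmt14 (n : ℕ) (hn : 0 < n) :
    (∃ t, HasIntervalTotalColoring (⊤ : SimpleGraph (Fin n)) t) ∧
    wtau (⊤ : SimpleGraph (Fin n)) = (if Odd n then n else 3 * n / 2) ∧
    Wtau (⊤ : SimpleGraph (Fin n)) = 2 * n - 1 := by
  have hex : HasIntervalTotalColoring (⊤ : SimpleGraph (Fin n)) (2 * n - 1) := existsW hn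
  refine ⟨⟨_, hex⟩, ?_, ?_⟩
  · rw [wtau]
    by_cases hodd : Odd n
    · rw [if_pos hodd]
      have hmem : n ∈ {t | HasIntervalTotalColoring (⊤ : SimpleGraph (Fin n)) t} :=
        existsOdd hn hodd
      exact le_antisymm (Nat.sInf_le hmem)
        (le_csInf ⟨_, hmem⟩ (fun t ht => lb_n hn ht))
    · rw [if_neg hodd]
      obtain ⟨r, hr⟩ := Nat.not_odd_iff_even.mp hodd
      have hm : n = 2 * r := by omega
      have hm0 : 0 < r := by omega
      have hmem : 3 * r ∈ {t | HasIntervalTotalColoring (⊤ : SimpleGraph (Fin n)) t} :=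
        existsEven r hm0 hm
      have h32 : 3 * n / 2 = 3 * r := by omega
      rw [h32]
      exact le_antisymm (Nat.sInf_le hmem)
        (le_csInf ⟨_, hmem⟩ (fun t ht => lb_even r hm0 hm ht))
  · rw [Wtau]
    refine le_antisymm (csSup_le ⟨_, hex⟩ (fun t ht => ub hn ht)) ?_
    exact le_csSup ⟨2 * n - 1, fun t ht => ub hn ht⟩ hex


end ITC
end

section
/- For any positive integer n, the complete balanced bipartite graph K_{n,n} has an interval total t-coloring for every t with n+2 ≤ t ≤ W_τ(K_{n,n}), where W_τ(K_{n,n}) = 2n+2 for n ≥ 2 and W_τ(K_{1,1}) = 3. -/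
namespace ITC

variable {V : Type*}

/-! ### Auxiliary material for `stmt15` -/

section KnnAux

open SimpleGraph

variable {n : ℕ}

private lemma knn_mem_edgeSet (n : ℕ) (i j : Fin n) :
    s(Sum.inl i, Sum.inr j) ∈ (completeBipartiteGraph (Fin n) (Fin n)).edgeSet := by
  simp [SimpleGraph.mem_edgeSet]

/-- Every edge of `K_{n,n}` has the form `s(inl i, inr j)`. -/
private lemma knn_edge_form (n : ℕ) (e : Sym2 (Fin n ⊕ Fin n))
    (he : e ∈ (completeBipartiteGraph (Fin n) (Fin n)).edgeSet) :
    ∃ i j, e = s(Sum.inl i, Sum.inr j) := by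
  induction e with
  | _ u v =>
    rw [SimpleGraph.mem_edgeSet] at he
    rcases u with i | i <;> rcases v with j | j <;> simp at he
    · exact ⟨i, j, rfl⟩
    · exact ⟨j, i, Sym2.eq_swap⟩

private lemma knn_deg (n : ℕ) (v : Fin n ⊕ Fin n) :
    deg (completeBipartiteGraph (Fin n) (Fin n)) v = n := by
  have hl : ∀ w : Fin n ⊕ Fin n,
      (completeBipartiteGraph (Fin n) (Fin n)).neighborSet w =
        Sum.elim (fun _ => Set.range (Sum.inr : Fin n → Fin n ⊕ Fin n))
          (fun _ => Set.range (Sum.inl : Fin n → Fin n ⊕ Fin n)) w := by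
    intro w
    ext u
    rcases w with i | i <;> rcases u with j | j <;>
      simp [SimpleGraph.neighborSet]
  have hr : (Set.range (Sum.inr : Fin n → Fin n ⊕ Fin n)).ncard = n := by
    rw [← Set.image_univ, Set.ncard_image_of_injective _ Sum.inr_injective,
      Set.ncard_univ, Nat.card_eq_fintype_card, Fintype.card_fin]
  have hr' : (Set.range (Sum.inl : Fin n → Fin n ⊕ Fin n)).ncard = n := by
    rw [← Set.image_univ, Set.ncard_image_of_injective _ Sum.inl_injective,
      Set.ncard_univ, Nat.card_eq_fintype_card, Fintype.card_fin]
  rcases v with i | i <;> simp [deg, hl, hr, hr']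

/-- A symmetric function giving edge colors from a matrix. -/
private def knnF (M : ℕ → ℕ → ℕ) : (Fin n ⊕ Fin n) → (Fin n ⊕ Fin n) → ℕ
  | Sum.inl i, Sum.inr j => M i j
  | Sum.inr j, Sum.inl i => M i j
  | _, _ => 0

private lemma knnF_symm (M : ℕ → ℕ → ℕ) :
    ∀ u v : Fin n ⊕ Fin n, knnF M u v = knnF M v u := by
  rintro (i | i) (j | j) <;> rfl

private def knnCe (n : ℕ) (M : ℕ → ℕ → ℕ) : Sym2 (Fin n ⊕ Fin n) → ℕ :=
  Sym2.lift ⟨knnF M, knnF_symm M⟩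

@[simp] private lemma knnCe_mk (n : ℕ) (M : ℕ → ℕ → ℕ) (i j : Fin n) :
    knnCe n M s(Sum.inl i, Sum.inr j) = M i j := rfl

/-- Generic construction lemma for interval total colorings of `K_{n,n}`. -/
private lemma knn_construct (n t : ℕ) (M : ℕ → ℕ → ℕ) (cL cR aL aR : ℕ → ℕ)
    (hrow_inj : ∀ i j j', i < n → j < n → j' < n → j ≠ j' → M i j ≠ M i j')
    (hcol_inj : ∀ i i' j, i < n → i' < n → j < n → i ≠ i' → M i j ≠ M i' j)
    (hvv : ∀ i j, i < n → j < n → cL i ≠ cR j)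
    (hveL : ∀ i j, i < n → j < n → cL i ≠ M i j)
    (hveR : ∀ i j, i < n → j < n → cR j ≠ M i j)
    (hcLr : ∀ i, i < n → 1 ≤ cL i ∧ cL i ≤ t)
    (hcRr : ∀ j, j < n → 1 ≤ cR j ∧ cR j ≤ t)
    (hMr : ∀ i j, i < n → j < n → 1 ≤ M i j ∧ M i j ≤ t)
    (hcover : ∀ c, 1 ≤ c → c ≤ t →
      (∃ i, i < n ∧ cL i = c) ∨ (∃ j, j < n ∧ cR j = c) ∨
      (∃ i j, i < n ∧ j < n ∧ M i j = c))
    (hLlo : ∀ i, i < n → aL i ≤ cL i ∧ cL i ≤ aL i + n)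
    (hLM : ∀ i j, i < n → j < n → aL i ≤ M i j ∧ M i j ≤ aL i + n)
    (hLsurj : ∀ i c, i < n → aL i ≤ c → c ≤ aL i + n → c ≠ cL i →
      ∃ j, j < n ∧ M i j = c)
    (hRlo : ∀ j, j < n → aR j ≤ cR j ∧ cR j ≤ aR j + n)
    (hRM : ∀ i j, i < n → j < n → aR j ≤ M i j ∧ M i j ≤ aR j + n)
    (hRsurj : ∀ j c, j < n → aR j ≤ c → c ≤ aR j + n → c ≠ cR j →
      ∃ i, i < n ∧ M i j = c) :
    HasIntervalTotalColoring (completeBipartiteGraph (Fin n) (Fin n)) t := by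
  set G := completeBipartiteGraph (Fin n) (Fin n) with hG
  refine ⟨Sum.elim (fun i => cL i) (fun j => cR j), knnCe n M, ?_, ?_, ?_, ?_, ?_⟩
  · refine ⟨?_, ?_, ?_⟩
    · rintro (i | i) (j | j) hadj <;> simp only [hG, completeBipartiteGraph_adj] at hadj <;>
        simp at hadj ⊢
      · exact hvv i j i.isLt j.isLt
      · exact fun h => hvv j i j.isLt i.isLt h.symm
    · intro e f he hf hef hshare
      obtain ⟨i, j, rfl⟩ := knn_edge_form n e he
      obtain ⟨i', j', rfl⟩ := knn_edge_form n f hf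
      obtain ⟨w, hw1, hw2⟩ := hshare
      rw [Sym2.mem_iff] at hw1 hw2
      simp only [knnCe_mk]
      rcases hw1 with rfl | rfl <;> rcases hw2 with h | h
      · -- inl i = inl i'
        obtain rfl : i = i' := Sum.inl_injective h.symm ▸ (by
          cases h; rfl)
        have hjj : j ≠ j' := by
          rintro rfl; exact hef rfl
        exact hrow_inj i j j' i.isLt j.isLt j'.isLt (fun hh => hjj (Fin.ext hh))
      · exact absurd h (by simp)
      · exact absurd h (by simp)
      · -- inr j = inr j'
        obtain rfl : j = j' := by
          injection h
        have hii : i ≠ i' := by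
          rintro rfl; exact hef rfl
        exact hcol_inj i i' j i.isLt i'.isLt j.isLt (fun hh => hii (Fin.ext hh))
    · intro v e he hv
      obtain ⟨i, j, rfl⟩ := knn_edge_form n e he
      rw [Sym2.mem_iff] at hv
      rcases hv with rfl | rfl <;> simp only [Sum.elim_inl, Sum.elim_inr, knnCe_mk]
      · exact hveL i j i.isLt j.isLt
      · exact hveR i j i.isLt j.isLt
  · rintro (i | i) <;> simp only [Sum.elim_inl, Sum.elim_inr] <;> rw [Set.mem_Icc]
    · exact hcLr i i.isLt
    · exact hcRr i i.isLt
  · intro e he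
    obtain ⟨i, j, rfl⟩ := knn_edge_form n e he
    rw [Set.mem_Icc, knnCe_mk]
    exact hMr i j i.isLt j.isLt
  · intro c hc
    rw [Set.mem_Icc] at hc
    rcases hcover c hc.1 hc.2 with ⟨i, hi, hiv⟩ | ⟨j, hj, hjv⟩ | ⟨i, j, hi, hj, hv⟩
    · exact Or.inl ⟨Sum.inl ⟨i, hi⟩, hiv⟩
    · exact Or.inl ⟨Sum.inr ⟨j, hj⟩, hjv⟩
    · exact Or.inr ⟨s(Sum.inl ⟨i, hi⟩, Sum.inr ⟨j, hj⟩), knn_mem_edgeSet n _ _, hv⟩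
  · -- palettes
    have hedge_palette_L : ∀ i : Fin n,
        {c | ∃ e ∈ G.edgeSet, Sum.inl i ∈ e ∧ knnCe n M e = c} =
          {c | ∃ j : Fin n, M i j = c} := by
      intro i
      ext c
      constructor
      · rintro ⟨e, he, hmem, rfl⟩
        obtain ⟨i', j, rfl⟩ := knn_edge_form n e he
        rw [Sym2.mem_iff] at hmem
        rcases hmem with h | h
        · obtain rfl : i' = i := by injection h.symm
          exact ⟨j, rfl⟩
        · exact absurd h (by simp)
      · rintro ⟨j, rfl⟩
        exact ⟨s(Sum.inl i, Sum.inr j), knn_mem_edgeSet n i j, by simp, rfl⟩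
    have hedge_palette_R : ∀ j : Fin n,
        {c | ∃ e ∈ G.edgeSet, Sum.inr j ∈ e ∧ knnCe n M e = c} =
          {c | ∃ i : Fin n, M i j = c} := by
      intro j
      ext c
      constructor
      · rintro ⟨e, he, hmem, rfl⟩
        obtain ⟨i, j', rfl⟩ := knn_edge_form n e he
        rw [Sym2.mem_iff] at hmem
        rcases hmem with h | h
        · exact absurd h (by simp)
        · obtain rfl : j' = j := by injection h.symm
          exact ⟨i, rfl⟩
      · rintro ⟨i, rfl⟩
        exact ⟨s(Sum.inl i, Sum.inr j), knn_mem_edgeSet n i j, by simp, rfl⟩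
    rintro (i | i)
    · refine ⟨aL i, ?_⟩
      rw [knn_deg]
      unfold palette
      rw [hedge_palette_L i]
      ext c
      simp only [Set.mem_insert_iff, Set.mem_setOf_eq, Set.mem_Icc, Sum.elim_inl]
      constructor
      · rintro (rfl | ⟨j, rfl⟩)
        · exact hLlo i i.isLt
        · exact hLM i j i.isLt j.isLt
      · rintro ⟨h1, h2⟩
        by_cases hc : c = cL i
        · exact Or.inl hc
        · obtain ⟨j, hj, hv⟩ := hLsurj i c i.isLt h1 h2 hc
          exact Or.inr ⟨⟨j, hj⟩, hv⟩
    · refine ⟨aR i, ?_⟩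
      rw [knn_deg]
      unfold palette
      rw [hedge_palette_R i]
      ext c
      simp only [Set.mem_insert_iff, Set.mem_setOf_eq, Set.mem_Icc, Sum.elim_inr]
      constructor
      · rintro (rfl | ⟨j, rfl⟩)
        · exact hRlo i i.isLt
        · exact hRM j i j.isLt i.isLt
      · rintro ⟨h1, h2⟩
        by_cases hc : c = cR i
        · exact Or.inl hc
        · obtain ⟨j, hj, hv⟩ := hRsurj i c i.isLt h1 h2 hc
          exact Or.inr ⟨⟨j, hj⟩, hv⟩

end KnnAux
section KnnFam

/-- Interval total coloring of `K_{n,n}` with `n+p+1` colors, `1 ≤ p ≤ n`. -/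
private lemma knn_famA (n p : ℕ) (hn : 1 ≤ n) (hp1 : 1 ≤ p) (hpn : p ≤ n) :
    HasIntervalTotalColoring (completeBipartiteGraph (Fin n) (Fin n)) (n + p + 1) := by
  apply knn_construct n (n + p + 1)
    (fun i j => if i < p then i + j + 2 else if i + j < n then i + j + 2 else i + j + 2 - n)
    (fun i => if i < p then i + 1 else 1)
    (fun j => if j + p ≤ n then n + 2 else j + p + 2)
    (fun i => if i < p then i + 1 else 1)
    (fun j => if j + p ≤ n then 2 else j + p + 2 - n)
  · intro i j j' hi hj hj' hne
    split_ifs <;> omega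
  · intro i i' j hi hi' hj hne
    split_ifs <;> omega
  · intro i j hi hj
    split_ifs <;> omega
  · intro i j hi hj
    split_ifs <;> omega
  · intro i j hi hj
    split_ifs <;> omega
  · intro i hi
    split_ifs <;> omega
  · intro j hj
    split_ifs <;> omega
  · intro i j hi hj
    split_ifs <;> omega
  · intro c h1 h2
    by_cases hc1 : c = 1
    · exact Or.inl ⟨0, by omega, by split_ifs <;> omega⟩
    by_cases hc2 : c ≤ n + 1
    · refine Or.inr (Or.inr ⟨0, c - 2, by omega, by omega, ?_⟩)
      split_ifs <;> omega
    by_cases hc3 : c = n + 2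
    · exact Or.inr (Or.inl ⟨0, by omega, by split_ifs <;> omega⟩)
    · refine Or.inr (Or.inl ⟨c - p - 2, by omega, ?_⟩)
      split_ifs <;> omega
  · intro i hi
    split_ifs <;> omega
  · intro i j hi hj
    split_ifs <;> omega
  · intro i c hi h1 h2 hc
    refine ⟨if i + 2 ≤ c then c - i - 2 else c + n - i - 2, ?_, ?_⟩ <;>
      · split_ifs at * <;> omega
  · intro j hj
    split_ifs <;> omega
  · intro i j hi hj
    split_ifs <;> omega
  · intro j c hj h1 h2 hc
    refine ⟨if j + 2 ≤ c then c - j - 2 else c + n - j - 2, ?_, ?_⟩ <;>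
      · split_ifs at * <;> omega

/-- Interval total coloring of `K_{n,n}` with `2n+2` colors, `n ≥ 2`. -/
private lemma knn_famB (n : ℕ) (hn : 2 ≤ n) :
    HasIntervalTotalColoring (completeBipartiteGraph (Fin n) (Fin n)) (2 * n + 2) := by
  apply knn_construct n (2 * n + 2)
    (fun i j => if i + 1 < n then i + j + 2 else j + n + 2)
    (fun i => if i + 1 < n then i + 1 else 2 * n + 2)
    (fun j => j + n + 1)
    (fun i => if i + 1 < n then i + 1 else n + 2)
    (fun j => j + 2)
  · intro i j j' hi hj hj' hne
    split_ifs <;> omega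
  · intro i i' j hi hi' hj hne
    split_ifs <;> omega
  · intro i j hi hj
    split_ifs <;> omega
  · intro i j hi hj
    split_ifs <;> omega
  · intro i j hi hj
    split_ifs <;> omega
  · intro i hi
    split_ifs <;> omega
  · intro j hj
    omega
  · intro i j hi hj
    split_ifs <;> omega
  · intro c h1 h2
    by_cases hc1 : c = 1
    · exact Or.inl ⟨0, by omega, by split_ifs <;> omega⟩
    by_cases hc2 : c ≤ n + 1
    · refine Or.inr (Or.inr ⟨0, c - 2, by omega, by omega, ?_⟩)
      split_ifs <;> omega
    by_cases hc3 : c ≤ 2 * n + 1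
    · refine Or.inr (Or.inr ⟨n - 1, c - n - 2, by omega, by omega, ?_⟩)
      split_ifs <;> omega
    · exact Or.inl ⟨n - 1, by omega, by split_ifs <;> omega⟩
  · intro i hi
    split_ifs <;> omega
  · intro i j hi hj
    split_ifs <;> omega
  · intro i c hi h1 h2 hc
    refine ⟨if i + 1 < n then c - i - 2 else c - n - 2, ?_, ?_⟩ <;>
      · split_ifs at * <;> omega
  · intro j hj
    omega
  · intro i j hi hj
    split_ifs <;> omega
  · intro j c hj h1 h2 hc
    refine ⟨if c ≤ j + n then c - j - 2 else n - 1, ?_, ?_⟩ <;>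
      · split_ifs at * <;> omega

end KnnFam
section KnnUpper

private lemma knn_card_aux (n t : ℕ) (hn : 1 ≤ n) (b f g : ℕ → ℕ)
    (hf_inj : ∀ j j', j < n → j' < n → j ≠ j' → f j ≠ f j')
    (hf_ub : ∀ j, j < n → f j ≤ n + 1)
    (hf_lb : ∀ j, j < n → b j ≤ f j)
    (hg_lb : ∀ j, j < n → t ≤ g j + n)
    (hg_ub : ∀ j, j < n → g j ≤ b j + n) :
    t ≤ 2 * n + 2 := by
  by_contra hlt
  push_neg at hlt
  have hb : ∀ j, j < n → 3 ≤ f j := by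
    intro j hj
    have := hg_lb j hj
    have := hg_ub j hj
    have := hf_lb j hj
    omega
  have hcard : (Finset.univ : Finset (Fin n)).card ≤ (Finset.Icc 3 (n + 1)).card := by
    apply Finset.card_le_card_of_injOn (fun j : Fin n => f j)
    · intro j _
      exact Finset.mem_Icc.2 ⟨hb j j.isLt, hf_ub j j.isLt⟩
    · intro j _ j' _ hjj
      by_contra hne
      exact hf_inj j j' j.isLt j'.isLt (fun h => hne (Fin.ext h)) hjj
  rw [Finset.card_univ, Fintype.card_fin, Nat.card_Icc] at hcard
  omega

private lemma knn_upper (n t : ℕ) (hn : 1 ≤ n)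
    (h : HasIntervalTotalColoring (completeBipartiteGraph (Fin n) (Fin n)) t) :
    t ≤ 2 * n + 2 ∧ (n = 1 → t ≤ 3) := by
  rcases Nat.eq_zero_or_pos t with rfl | ht
  · exact ⟨by omega, fun _ => by omega⟩
  set G := completeBipartiteGraph (Fin n) (Fin n) with hG
  obtain ⟨cv, ce, ⟨hvv, hee, hve⟩, hcvr, hcer, hcov, hpal⟩ := h
  have hpal' : ∀ v, ∃ a, palette G cv ce v = Set.Icc a (a + n) := by
    intro v
    have := hpal v
    rwa [knn_deg] at this
  choose a ha using hpal'
  -- palette elements lie in [1, t]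
  have hsub : ∀ v c, c ∈ palette G cv ce v → 1 ≤ c ∧ c ≤ t := by
    intro v c hc
    rcases Set.mem_insert_iff.1 hc with rfl | ⟨e, he, -, rfl⟩
    · have := hcvr v; rw [Set.mem_Icc] at this; exact this
    · have := hcer e he; rw [Set.mem_Icc] at this; exact this
  have ha1 : ∀ v, 1 ≤ a v ∧ a v + n ≤ t := by
    intro v
    have h1 : a v ∈ palette G cv ce v := by
      rw [ha v]; exact Set.mem_Icc.2 ⟨le_rfl, by omega⟩
    have h2 : a v + n ∈ palette G cv ce v := by
      rw [ha v]; exact Set.mem_Icc.2 ⟨by omega, le_rfl⟩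
    exact ⟨(hsub v _ h1).1, (hsub v _ h2).2⟩
  -- edge colors lie in both endpoint palettes
  have hEmem : ∀ (i j : Fin n),
      a (Sum.inl i) ≤ ce s(Sum.inl i, Sum.inr j) ∧
      ce s(Sum.inl i, Sum.inr j) ≤ a (Sum.inl i) + n ∧
      a (Sum.inr j) ≤ ce s(Sum.inl i, Sum.inr j) ∧
      ce s(Sum.inl i, Sum.inr j) ≤ a (Sum.inr j) + n := by
    intro i j
    have h1 : ce s(Sum.inl i, Sum.inr j) ∈ palette G cv ce (Sum.inl i) :=
      Set.mem_insert_of_mem _ ⟨s(Sum.inl i, Sum.inr j), knn_mem_edgeSet n i j, by simp, rfl⟩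
    have h2 : ce s(Sum.inl i, Sum.inr j) ∈ palette G cv ce (Sum.inr j) :=
      Set.mem_insert_of_mem _ ⟨s(Sum.inl i, Sum.inr j), knn_mem_edgeSet n i j, by simp, rfl⟩
    rw [ha _, Set.mem_Icc] at h1 h2
    exact ⟨h1.1, h1.2, h2.1, h2.2⟩
  -- there is a vertex whose palette starts at 1
  have hpal_of_mem : ∀ c, 1 ≤ c → c ≤ t → ∃ v, c ∈ palette G cv ce v := by
    intro c h1 h2
    rcases hcov c (Set.mem_Icc.2 ⟨h1, h2⟩) with ⟨v, hv⟩ | ⟨e, he, hce⟩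
    · exact ⟨v, hv ▸ Set.mem_insert _ _⟩
    · obtain ⟨i, j, rfl⟩ := knn_edge_form n e he
      exact ⟨Sum.inl i, Set.mem_insert_of_mem _ ⟨_, he, by simp, hce⟩⟩
  obtain ⟨v0, hv0⟩ := hpal_of_mem 1 le_rfl ht
  obtain ⟨v1, hv1⟩ := hpal_of_mem t ht le_rfl
  rw [ha _, Set.mem_Icc] at hv0 hv1
  have ha0 : a v0 = 1 := by have := (ha1 v0).1; omega
  have haT : a v1 + n = t := by have := (ha1 v1).1; have := (ha1 v1).2; omega
  -- edge colors distinct at a common left endpoint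
  have hrow_ne : ∀ (i : Fin n) (j j' : Fin n), j ≠ j' →
      ce s(Sum.inl i, Sum.inr j) ≠ ce s(Sum.inl i, Sum.inr j') := by
    intro i j j' hjj
    apply hee _ _ (knn_mem_edgeSet n i j) (knn_mem_edgeSet n i j')
    · simp [Sym2.eq_iff]
      intro h
      exact absurd h hjj
    · exact ⟨Sum.inl i, by simp, by simp⟩
  have hcol_ne : ∀ (j : Fin n) (i i' : Fin n), i ≠ i' →
      ce s(Sum.inl i, Sum.inr j) ≠ ce s(Sum.inl i', Sum.inr j) := by
    intro j i i' hii
    apply hee _ _ (knn_mem_edgeSet n i j) (knn_mem_edgeSet n i' j)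
    · simp [Sym2.eq_iff]
      intro h
      exact absurd h hii
    · exact ⟨Sum.inr j, by simp, by simp⟩
  have main : t ≤ 2 * n + 1 ∨
      ((∃ i0 i1 : Fin n, v0 = Sum.inl i0 ∧ v1 = Sum.inl i1) ∨
       (∃ j0 j1 : Fin n, v0 = Sum.inr j0 ∧ v1 = Sum.inr j1)) := by
    rcases hv : v0 with i0 | j0 <;> rcases hw : v1 with i1 | j1
    · exact Or.inr (Or.inl ⟨i0, i1, rfl, rfl⟩)
    · left
      have := hEmem i0 j1
      rw [← hv, ← hw] at this  -- ?
      omega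
    · left
      have := hEmem i1 j0
      rw [← hv, ← hw] at this
      omega
    · exact Or.inr (Or.inr ⟨j0, j1, rfl, rfl⟩)
  have hmain2 : t ≤ 2 * n + 2 := by
    rcases main with hle | ⟨i0, i1, rfl, rfl⟩ | ⟨j0, j1, rfl, rfl⟩
    · omega
    · apply knn_card_aux n t hn (fun j => if hj : j < n then a (Sum.inr ⟨j, hj⟩) else 0)
        (fun j => if hj : j < n then ce s(Sum.inl i0, Sum.inr ⟨j, hj⟩) else 0)
        (fun j => if hj : j < n then ce s(Sum.inl i1, Sum.inr ⟨j, hj⟩) else 0)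
      · intro j j' hj hj' hne
        simp only [dif_pos hj, dif_pos hj']
        exact hrow_ne i0 ⟨j, hj⟩ ⟨j', hj'⟩ (by simp [Fin.ext_iff]; omega)
      · intro j hj
        simp only [dif_pos hj]
        have := hEmem i0 ⟨j, hj⟩
        omega
      · intro j hj
        simp only [dif_pos hj]
        have := hEmem i0 ⟨j, hj⟩
        omega
      · intro j hj
        simp only [dif_pos hj]
        have := hEmem i1 ⟨j, hj⟩
        omega
      · intro j hj
        simp only [dif_pos hj]
        have := hEmem i1 ⟨j, hj⟩
        omega
    · apply knn_card_aux n t hn (fun i => if hi : i < n then a (Sum.inl ⟨i, hi⟩) else 0)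
        (fun i => if hi : i < n then ce s(Sum.inl ⟨i, hi⟩, Sum.inr j0) else 0)
        (fun i => if hi : i < n then ce s(Sum.inl ⟨i, hi⟩, Sum.inr j1) else 0)
      · intro i i' hi hi' hne
        simp only [dif_pos hi, dif_pos hi']
        exact hcol_ne j0 ⟨i, hi⟩ ⟨i', hi'⟩ (by simp [Fin.ext_iff]; omega)
      · intro i hi
        simp only [dif_pos hi]
        have := hEmem ⟨i, hi⟩ j0
        omega
      · intro i hi
        simp only [dif_pos hi]
        have := hEmem ⟨i, hi⟩ j0
        omega
      · intro i hi
        simp only [dif_pos hi]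
        have := hEmem ⟨i, hi⟩ j1
        omega
      · intro i hi
        simp only [dif_pos hi]
        have := hEmem ⟨i, hi⟩ j1
        omega
  refine ⟨hmain2, fun hn1 => ?_⟩
  subst hn1
  rcases main with hle | ⟨i0, i1, h0, h1⟩ | ⟨j0, j1, h0, h1⟩
  · omega
  · have h2 : i0 = i1 := Subsingleton.elim _ _
    rw [h0] at ha0
    rw [h1] at haT
    rw [h2] at ha0
    omega
  · have h2 : j0 = j1 := Subsingleton.elim _ _
    rw [h0] at ha0
    rw [h1] at haT
    rw [h2] at ha0
    omega

end KnnUpper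
section KnnFinal

private lemma knn_Wtau_eq (n T : ℕ)
    (hmem : HasIntervalTotalColoring (completeBipartiteGraph (Fin n) (Fin n)) T)
    (hub : ∀ t, HasIntervalTotalColoring (completeBipartiteGraph (Fin n) (Fin n)) t → t ≤ T) :
    Wtau (completeBipartiteGraph (Fin n) (Fin n)) = T := by
  unfold Wtau
  apply le_antisymm
  · exact csSup_le ⟨T, hmem⟩ (fun t ht => hub t ht)
  · exact le_csSup ⟨T, fun t ht => hub t ht⟩ hmem

private lemma knn_Wtau_big (n : ℕ) (hn : 2 ≤ n) :
    Wtau (completeBipartiteGraph (Fin n) (Fin n)) = 2 * n + 2 :=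
  knn_Wtau_eq n (2 * n + 2) (knn_famB n hn)
    (fun t ht => (knn_upper n t (by omega) ht).1)

private lemma knn_Wtau_one :
    Wtau (completeBipartiteGraph (Fin 1) (Fin 1)) = 3 :=
  knn_Wtau_eq 1 3 (knn_famA 1 1 le_rfl le_rfl le_rfl)
    (fun t ht => (knn_upper 1 t le_rfl ht).2 rfl)

end KnnFinal

theorem stmt15 (n : ℕ) (hn : 0 < n) :
    (∀ t, n + 2 ≤ t → t ≤ Wtau (completeBipartiteGraph (Fin n) (Fin n)) →
      HasIntervalTotalColoring (completeBipartiteGraph (Fin n) (Fin n)) t) ∧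
    (2 ≤ n → Wtau (completeBipartiteGraph (Fin n) (Fin n)) = 2 * n + 2) ∧
    (n = 1 → Wtau (completeBipartiteGraph (Fin n) (Fin n)) = 3) := by
  refine ⟨?_, fun h2 => knn_Wtau_big n h2, fun h1 => h1 ▸ knn_Wtau_one⟩
  intro t h1 h2
  rcases eq_or_lt_of_le (show 1 ≤ n from hn) with hn1 | hn2
  · -- n = 1
    obtain rfl : n = 1 := hn1.symm
    rw [knn_Wtau_one] at h2
    obtain rfl : t = 3 := by omega
    exact knn_famA 1 1 le_rfl le_rfl le_rfl
  · -- n ≥ 2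
    rw [knn_Wtau_big n hn2] at h2
    by_cases ht : t ≤ 2 * n + 1
    · have he : n + (t - n - 1) + 1 = t := by omega
      exact he ▸ knn_famA n (t - n - 1) (by omega) (by omega) (by omega)
    · obtain rfl : t = 2 * n + 2 := by omega
      exact knn_famB n hn2

end ITC
end
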